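/- The function g(y) = (1 - y)·Φ(1 - y, 1, Δ), where Φ(z,1,Δ) = ∑_{j=0}^∞ z^j/(j+Δ) and Δ ≥ 2 is a fixed integer, is continuous and strictly decreasing on (0, 1), tends to +∞ as y → 0⁺, and satisfies g(1) = 0. Consequently, for every ε with 0 < Δε < g(y₀) for some y₀ ∈ (0,1), the equation g(y) = Δε has a unique solution y ∈ (0,1). -/

import Mathlib

open Filter Set Finset

private lemma aux_summable (Δ : ℕ) (hΔ : 1 ≤ Δ) {x : ℝ} (hx0 : 0 ≤ x) (hx1 : x < 1) :
    Summable (fun j : ℕ => x ^ j / ((j : ℝ) + Δ)) := by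
  refine Summable.of_nonneg_of_le (fun j => ?_) (fun j => ?_)
    (summable_geometric_of_lt_one hx0 hx1)
  · exact div_nonneg (pow_nonneg hx0 j) (by positivity)
  · refine div_le_self (pow_nonneg hx0 j) ?_
    have : (1 : ℝ) ≤ Δ := by exact_mod_cast hΔ
    have : (0 : ℝ) ≤ j := Nat.cast_nonneg j
    linarith

private lemma aux_eq (Δ : ℕ) (x : ℝ) :
    x * ∑' j : ℕ, x ^ j / ((j : ℝ) + Δ) = ∑' j : ℕ, x ^ (j + 1) / ((j : ℝ) + Δ) := by
  rw [← tsum_mul_left]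
  exact tsum_congr fun j => by rw [pow_succ]; ring

private lemma aux_summable' (Δ : ℕ) (hΔ : 1 ≤ Δ) {x : ℝ} (hx0 : 0 ≤ x) (hx1 : x < 1) :
    Summable (fun j : ℕ => x ^ (j + 1) / ((j : ℝ) + Δ)) := by
  have := (aux_summable Δ hΔ hx0 hx1).mul_left x
  refine this.congr fun j => ?_
  rw [pow_succ]; ring

private lemma aux_mono (Δ : ℕ) (hΔ : 1 ≤ Δ) {a b : ℝ} (ha : 0 < a) (hab : a < b)
    (hb : b < 1) :
    a * ∑' j : ℕ, a ^ j / ((j : ℝ) + Δ) < b * ∑' j : ℕ, b ^ j / ((j : ℝ) + Δ) := by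
  rw [aux_eq, aux_eq]
  have hΔ' : (0 : ℝ) < Δ := by exact_mod_cast hΔ
  refine Summable.tsum_lt_tsum_of_nonneg (fun j => ?_) (fun j => ?_) (i := 0) ?_
    (aux_summable' Δ hΔ (by linarith) hb)
  · exact div_nonneg (pow_nonneg ha.le _) (by positivity)
  · have hd : (0 : ℝ) < (j : ℝ) + Δ := by
      have := (Nat.cast_nonneg j : (0:ℝ) ≤ j); linarith
    rw [div_le_div_iff_of_pos_right hd]
    exact pow_le_pow_left₀ ha.le hab.le _
  · simp only [Nat.cast_zero, zero_add, pow_one]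
    exact (div_lt_div_iff_of_pos_right hΔ').mpr hab

private lemma aux_cont (Δ : ℕ) (hΔ : 1 ≤ Δ) :
    ContinuousOn (fun x : ℝ => ∑' j : ℕ, x ^ j / ((j : ℝ) + Δ)) (Ioo 0 1) := by
  intro x hx
  have hr1 : x < (1 + x) / 2 := by linarith [hx.2]
  have hr2 : (1 + x) / 2 < 1 := by linarith [hx.2]
  have hr0 : (0 : ℝ) ≤ (1 + x) / 2 := by linarith [hx.1]
  have hcont : ContinuousOn (fun x : ℝ => ∑' j : ℕ, x ^ j / ((j : ℝ) + Δ))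
      (Icc 0 ((1 + x) / 2)) := by
    refine continuousOn_tsum (fun j => ?_) (summable_geometric_of_lt_one hr0 hr2)
      (fun j t ht => ?_)
    · exact (continuous_pow j).continuousOn.div_const _
    · have hΔ' : (1 : ℝ) ≤ (j : ℝ) + Δ := by
        have : (1 : ℝ) ≤ Δ := by exact_mod_cast hΔ
        have := (Nat.cast_nonneg j : (0:ℝ) ≤ j); linarith
      have h1 : |t ^ j / ((j : ℝ) + Δ)| = t ^ j / ((j : ℝ) + Δ) := by
        rw [abs_of_nonneg (div_nonneg (pow_nonneg ht.1 j) (by linarith))]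
      rw [Real.norm_eq_abs, h1]
      calc t ^ j / ((j : ℝ) + Δ) ≤ t ^ j := div_le_self (pow_nonneg ht.1 j) hΔ'
        _ ≤ ((1 + x) / 2) ^ j := pow_le_pow_left₀ ht.1 ht.2 j
  exact (hcont.continuousAt (Icc_mem_nhds hx.1 hr1)).continuousWithinAt

private lemma aux_harm (Δ : ℕ) (hΔ : 1 ≤ Δ) :
    Tendsto (fun N : ℕ => ∑ j ∈ range N, 1 / ((j : ℝ) + Δ)) atTop atTop := by
  have hΔ' : (0 : ℝ) < Δ := by exact_mod_cast hΔ
  have h1 : Tendsto (fun N : ℕ => (Δ : ℝ)⁻¹ * ∑ j ∈ range N, 1 / ((j : ℝ) + 1))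
      atTop atTop :=
    Real.tendsto_sum_range_one_div_nat_succ_atTop.const_mul_atTop (by positivity)
  refine tendsto_atTop_mono (fun N => ?_) h1
  rw [Finset.mul_sum]
  refine Finset.sum_le_sum fun j _ => ?_
  have hj : (0 : ℝ) ≤ j := Nat.cast_nonneg j
  have hΔ1 : (1 : ℝ) ≤ Δ := by exact_mod_cast hΔ
  have h : (Δ : ℝ)⁻¹ * (1 / ((j : ℝ) + 1)) = 1 / ((Δ : ℝ) * ((j : ℝ) + 1)) := by
    rw [one_div, one_div, ← mul_inv]
  rw [h]
  refine one_div_le_one_div_of_le (by linarith) ?_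
  nlinarith

private lemma aux_lb (Δ N : ℕ) (hΔ : 1 ≤ Δ) {x : ℝ} (hx0 : 0 ≤ x) (hx1 : x < 1) :
    x ^ N * ∑ j ∈ range N, 1 / ((j : ℝ) + Δ) ≤ x * ∑' j : ℕ, x ^ j / ((j : ℝ) + Δ) := by
  rw [aux_eq, Finset.mul_sum]
  calc ∑ j ∈ range N, x ^ N * (1 / ((j : ℝ) + Δ))
      ≤ ∑ j ∈ range N, x ^ (j + 1) / ((j : ℝ) + Δ) := by
        refine Finset.sum_le_sum fun j hj => ?_
        rw [mul_one_div]
        have hjN : j + 1 ≤ N := Finset.mem_range.mp hj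
        have hle : x ^ N ≤ x ^ (j + 1) := pow_le_pow_of_le_one hx0 hx1.le hjN
        have hd : (0 : ℝ) < (j : ℝ) + Δ := by
          have h1 : (1 : ℝ) ≤ Δ := by exact_mod_cast hΔ
          have := (Nat.cast_nonneg j : (0:ℝ) ≤ j); linarith
        rw [div_le_div_iff_of_pos_right hd]
        exact hle
    _ ≤ ∑' j : ℕ, x ^ (j + 1) / ((j : ℝ) + Δ) := by
        refine Summable.sum_le_tsum _ (fun j _ => div_nonneg (pow_nonneg hx0 _) (by positivity))
          (aux_summable' Δ hΔ hx0 hx1)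

private lemma aux_ub (Δ : ℕ) (hΔ : 1 ≤ Δ) {y : ℝ} (hy0 : 0 < y) (hy1 : y < 1) :
    (1 - y) * ∑' j : ℕ, (1 - y) ^ j / ((j : ℝ) + Δ) ≤ (1 - y) / (Δ * y) := by
  have hx0 : (0 : ℝ) ≤ 1 - y := by linarith
  have hx1 : 1 - y < 1 := by linarith
  have hΔ' : (0 : ℝ) < Δ := by exact_mod_cast hΔ
  have hS : ∑' j : ℕ, (1 - y) ^ j / ((j : ℝ) + Δ) ≤ ∑' j : ℕ, (1 - y) ^ j / (Δ : ℝ) := by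
    refine Summable.tsum_le_tsum (fun j => ?_) (aux_summable Δ hΔ hx0 hx1) ?_
    · exact div_le_div_of_nonneg_left (pow_nonneg hx0 j) hΔ'
        (le_add_of_nonneg_left (Nat.cast_nonneg j))
    · exact (summable_geometric_of_lt_one hx0 hx1).div_const _
  have hgeo : ∑' j : ℕ, (1 - y) ^ j / (Δ : ℝ) = (1 / y) / Δ := by
    rw [tsum_div_const, tsum_geometric_of_lt_one hx0 hx1]
    norm_num
  calc (1 - y) * ∑' j : ℕ, (1 - y) ^ j / ((j : ℝ) + Δ)
      ≤ (1 - y) * ((1 / y) / Δ) := by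
        rw [← hgeo]; exact mul_le_mul_of_nonneg_left hS hx0
    _ = (1 - y) / (Δ * y) := by rw [div_div, mul_one_div, mul_comm (Δ : ℝ) y]

/-- With `g(y) = (1-y)·Φ(1-y,1,Δ)` for a fixed integer `Δ ≥ 2`: `g` is continuous
and strictly decreasing on `(0,1)`, `g(y) → ∞` as `y → 0⁺`, `g(1) = 0`, and for
every `ε > 0` with `Δε < g(y₀)` for some `y₀ ∈ (0,1)`, the equation `g(y) = Δε`
has a unique solution `y ∈ (0,1)`. -/
theorem g_properties (Δ : ℕ) (hΔ : 2 ≤ Δ) :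
    ContinuousOn (fun y : ℝ => (1 - y) * ∑' j : ℕ, (1 - y) ^ j / ((j : ℝ) + Δ))
      (Set.Ioo 0 1) ∧
    StrictAntiOn (fun y : ℝ => (1 - y) * ∑' j : ℕ, (1 - y) ^ j / ((j : ℝ) + Δ))
      (Set.Ioo 0 1) ∧
    Filter.Tendsto (fun y : ℝ => (1 - y) * ∑' j : ℕ, (1 - y) ^ j / ((j : ℝ) + Δ))
      (nhdsWithin 0 (Set.Ioi 0)) Filter.atTop ∧
    (fun y : ℝ => (1 - y) * ∑' j : ℕ, (1 - y) ^ j / ((j : ℝ) + Δ)) 1 = 0 ∧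
    (∀ ε : ℝ, 0 < ε →
      (∃ y₀ ∈ Set.Ioo (0 : ℝ) 1,
        Δ * ε < (1 - y₀) * ∑' j : ℕ, (1 - y₀) ^ j / ((j : ℝ) + Δ)) →
      ∃! y : ℝ, y ∈ Set.Ioo (0 : ℝ) 1 ∧
        (1 - y) * (∑' j : ℕ, (1 - y) ^ j / ((j : ℝ) + Δ)) = Δ * ε) := by
  have hΔ1 : 1 ≤ Δ := le_trans one_le_two hΔ
  set g : ℝ → ℝ := fun y => (1 - y) * ∑' j : ℕ, (1 - y) ^ j / ((j : ℝ) + Δ) with hg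
  -- continuity
  have hsub : Continuous (fun y : ℝ => 1 - y) := continuous_const.sub continuous_id
  have hmaps : MapsTo (fun y : ℝ => 1 - y) (Ioo 0 1) (Ioo 0 1) := by
    intro y hy
    obtain ⟨h1, h2⟩ := hy
    exact ⟨by show (0:ℝ) < 1 - y; linarith, by show (1:ℝ) - y < 1; linarith⟩
  have hcont : ContinuousOn g (Ioo 0 1) :=
    hsub.continuousOn.mul ((aux_cont Δ hΔ1).comp hsub.continuousOn hmaps)
  -- strict antitone
  have hanti : StrictAntiOn g (Ioo 0 1) := by
    intro y₁ hy₁ y₂ hy₂ h12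
    exact aux_mono Δ hΔ1 (by linarith [hy₂.2]) (by linarith) (by linarith [hy₁.1])
  -- tendsto
  have htend : Tendsto g (nhdsWithin 0 (Ioi 0)) atTop := by
    rw [tendsto_atTop]
    intro M
    obtain ⟨N, hN⟩ := ((aux_harm Δ hΔ1).eventually_ge_atTop (2 * max M 0)).exists
    have hpow : Tendsto (fun y : ℝ => (1 - y) ^ N) (nhds 0) (nhds 1) := by
      have := (hsub.tendsto (0 : ℝ)).pow N
      simpa using this
    have hev1 : ∀ᶠ y : ℝ in nhds 0, (1 / 2 : ℝ) ≤ (1 - y) ^ N :=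
      hpow.eventually (eventually_ge_nhds (by norm_num))
    have hev2 : ∀ᶠ y : ℝ in nhds 0, y < 1 := eventually_lt_nhds one_pos
    filter_upwards [nhdsWithin_le_nhds hev1, nhdsWithin_le_nhds hev2,
      self_mem_nhdsWithin] with y h1 h2 h3
    have hy0 : (0 : ℝ) < y := h3
    have hx0 : (0 : ℝ) ≤ 1 - y := by linarith
    have hx1 : 1 - y < 1 := by linarith
    have hlb := aux_lb Δ N hΔ1 hx0 hx1
    have hC : (0 : ℝ) ≤ max M 0 := le_max_right M 0
    have h2M : 2 * max M 0 ≤ ∑ j ∈ range N, 1 / ((j : ℝ) + Δ) := hN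
    have hMle : M ≤ max M 0 := le_max_left M 0
    have : M ≤ (1 - y) ^ N * ∑ j ∈ range N, 1 / ((j : ℝ) + Δ) := by
      nlinarith [pow_nonneg hx0 N]
    exact this.trans hlb
  -- value at 1
  have hval : g 1 = 0 := by simp [hg]
  refine ⟨hcont, hanti, htend, hval, ?_⟩
  -- existence and uniqueness
  rintro ε hε ⟨y₀, hy₀, hgy₀⟩
  have hΔ' : (0 : ℝ) < Δ := by positivity
  have hΔε : (0 : ℝ) < (Δ : ℝ) * ε := by positivity
  set c : ℝ := 1 / (1 + Δ ^ 2 * ε) with hc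
  have hd0 : (0 : ℝ) < 1 + (Δ : ℝ) ^ 2 * ε := by positivity
  have hc0 : 0 < c := by positivity
  have hc1 : c < 1 := by
    rw [hc, div_lt_one hd0]
    nlinarith
  set y₁ : ℝ := (max y₀ c + 1) / 2 with hy₁def
  have hmax1 : max y₀ c < 1 := max_lt hy₀.2 hc1
  have hy₁gt : max y₀ c < y₁ := by rw [hy₁def]; linarith
  have hy₁lt : y₁ < 1 := by rw [hy₁def]; linarith
  have hy₁0 : 0 < y₁ := lt_trans (lt_of_lt_of_le hc0 (le_max_right y₀ c)) hy₁gt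
  have hy₀lt : y₀ < y₁ := lt_of_le_of_lt (le_max_left y₀ c) hy₁gt
  have hclt : c < y₁ := lt_of_le_of_lt (le_max_right y₀ c) hy₁gt
  have hgy₁ : g y₁ < Δ * ε := by
    refine lt_of_le_of_lt (aux_ub Δ hΔ1 hy₁0 hy₁lt) ?_
    rw [div_lt_iff₀ (by positivity)]
    rw [hc, div_lt_iff₀ hd0] at hclt
    nlinarith
  have hIcc : Icc y₀ y₁ ⊆ Ioo 0 1 := fun z hz =>
    ⟨lt_of_lt_of_le hy₀.1 hz.1, lt_of_le_of_lt hz.2 hy₁lt⟩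
  obtain ⟨y, hymem, hyeq⟩ :=
    intermediate_value_Icc' hy₀lt.le (hcont.mono hIcc) ⟨hgy₁.le, hgy₀.le⟩
  refine ⟨y, ⟨hIcc hymem, hyeq⟩, ?_⟩
  rintro z ⟨hz, hzeq⟩
  exact hanti.injOn hz (hIcc hymem) (hzeq.trans hyeq.symm)
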